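/- Let T be a finite tree-with-loop and x a vertex of T. Let (X_n)_{n≥0} be the simple random walk on T started at x (possibly carrying extra independent randomization), with stationary distribution π_T(v) = deg(v)/Σ_z deg(z), and let η be a strong stationary time for (X_n) that is almost surely finite. Let (Z_n)_{n≥1} be independent nonnegative-integer-valued random variables, independent of the pair ((X_n)_{n≥0}, η), such that P(Z_n = 0) > 0 for every n and such that τ := inf{n > 0 : Z_n ≥ 1} is almost surely finite. Then P(η < τ) > 0 and, for every vertex v of T, P(X_η = v | η < τ) = P(X_{τ−1} = v | η < τ) = π_T(v). -/

import Mathlib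

open MeasureTheory ProbabilityTheory
open scoped ENNReal

/-- A finite tree with a self-loop attached at a distinguished root:
a finite tree `g` on at least two vertices together with a root. -/
structure TreeWithLoop (S : Type*) [Fintype S] [DecidableEq S] where
  g : SimpleGraph S
  isTree : g.IsTree
  root : S
  card_ge : 2 ≤ Fintype.card S

namespace TreeWithLoop

variable {S : Type*} [Fintype S] [DecidableEq S]

/-- The degree of a vertex: number of tree edges, plus `1` at the root (the loop counts once). -/
noncomputable def deg (T : TreeWithLoop S) (x : S) : ℕ :=
  letI : DecidableRel T.g.Adj := Classical.decRel _
  T.g.degree x + (if x = T.root then 1 else 0)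

/-- One-step transition probabilities (as an `ℝ≥0∞`-valued matrix) of the simple random walk:
`P x y = 1/deg x` for tree edges, `P root root = 1/deg root`, `0` otherwise. -/
noncomputable def stepM (T : TreeWithLoop S) : Matrix S S ℝ≥0∞ :=
  Matrix.of fun x y =>
    letI : DecidableRel T.g.Adj := Classical.decRel _
    if T.g.Adj x y then ((T.deg x : ℝ≥0∞))⁻¹
    else if x = y ∧ x = T.root then ((T.deg T.root : ℝ≥0∞))⁻¹
    else 0

/-- The stationary distribution `π(v) = deg v / Σ_z deg z` of the walk. -/
noncomputable def statDist (T : TreeWithLoop S) (v : S) : ℝ≥0∞ :=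
  (T.deg v : ℝ≥0∞) / ∑ z : S, (T.deg z : ℝ≥0∞)

end TreeWithLoop

namespace TreeWithLoop

variable {S : Type*} [Fintype S] [DecidableEq S]

lemma deg_pos (T : TreeWithLoop S) (v : S) : 0 < T.deg v := by
  classical
  obtain ⟨w, hw⟩ := Fintype.exists_ne_of_one_lt_card (by have := T.card_ge; omega) v
  obtain ⟨p⟩ := T.isTree.isConnected.preconnected v w
  have hadj : ∃ u, T.g.Adj v u := by
    cases p with
    | nil => exact absurd rfl (Ne.symm hw)
    | cons h _ => exact ⟨_, h⟩
  unfold deg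
  by_cases hv : v = T.root
  · rw [if_pos hv]; omega
  · rw [if_neg hv, Nat.add_zero, SimpleGraph.degree_pos_iff_exists_adj]
    exact hadj


lemma deg_ne_zero (T : TreeWithLoop S) (v : S) : (T.deg v : ℝ≥0∞) ≠ 0 := by
  simpa using (T.deg_pos v).ne'

lemma deg_ne_top (T : TreeWithLoop S) (v : S) : (T.deg v : ℝ≥0∞) ≠ ∞ :=
  ENNReal.natCast_ne_top _

lemma rowSum (T : TreeWithLoop S) (v : S) : ∑ y : S, T.stepM v y = 1 := by
  letI : DecidableRel T.g.Adj := Classical.decRel _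
  set c : ℝ≥0∞ := ((T.deg v : ℝ≥0∞))⁻¹ with hc
  have hpt : ∀ y : S, T.stepM v y =
      (if T.g.Adj v y then c else 0) + (if v = y ∧ v = T.root then c else 0) := by
    intro y
    simp only [stepM, Matrix.of_apply]
    by_cases h : T.g.Adj v y
    · have hne : ¬(v = y ∧ v = T.root) := by
        rintro ⟨rfl, -⟩; exact T.g.irrefl h
      rw [if_pos h, if_pos h, if_neg hne, add_zero]
    · rw [if_neg h, if_neg h, zero_add]
      by_cases he : v = y ∧ v = T.root
      · rw [if_pos he, if_pos he, hc, he.2]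
      · rw [if_neg he, if_neg he]
  rw [Finset.sum_congr rfl fun y _ => hpt y, Finset.sum_add_distrib]
  have h1 : ∑ y : S, (if T.g.Adj v y then c else 0) = (T.g.degree v : ℝ≥0∞) * c := by
    rw [← Finset.sum_filter, Finset.sum_const, ← SimpleGraph.neighborFinset_eq_filter,
      nsmul_eq_mul]
    rfl
  have h2 : ∑ y : S, (if v = y ∧ v = T.root then c else 0)
      = (if v = T.root then c else 0) := by
    by_cases hr : v = T.root
    · simp [hr]
    · simp [hr]
  rw [h1, h2]
  have : (T.g.degree v : ℝ≥0∞) * c + (if v = T.root then c else 0)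
      = ((T.deg v : ℕ) : ℝ≥0∞) * c := by
    unfold deg
    by_cases hr : v = T.root
    · rw [if_pos hr, if_pos hr]
      push_cast
      ring
    · rw [if_neg hr, if_neg hr]
      push_cast
      ring
  rw [this, hc, ENNReal.mul_inv_cancel (T.deg_ne_zero v) (T.deg_ne_top v)]

lemma balance (T : TreeWithLoop S) (u w : S) :
    (T.deg u : ℝ≥0∞) * T.stepM u w = (T.deg w : ℝ≥0∞) * T.stepM w u := by
  classical
  simp only [stepM, Matrix.of_apply]
  by_cases h : T.g.Adj u w
  · rw [if_pos h, if_pos h.symm, ENNReal.mul_inv_cancel (T.deg_ne_zero u) (T.deg_ne_top u),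
      ENNReal.mul_inv_cancel (T.deg_ne_zero w) (T.deg_ne_top w)]
  · have h' : ¬ T.g.Adj w u := fun hh => h hh.symm
    rw [if_neg h, if_neg h']
    by_cases he : u = w ∧ u = T.root
    · obtain ⟨rfl, he2⟩ := he
      simp [he2]
    · have he' : ¬(w = u ∧ w = T.root) := fun hh => he ⟨hh.1.symm, hh.1.symm.trans hh.2⟩
      rw [if_neg he, if_neg he']
      simp

lemma sumDeg_ne_zero (T : TreeWithLoop S) : (∑ z : S, (T.deg z : ℝ≥0∞)) ≠ 0 := by
  have h : Nonempty S := Fintype.card_pos_iff.mp (by have := T.card_ge; omega)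
  obtain ⟨z⟩ := h
  intro hz
  have := Finset.sum_eq_zero_iff.mp hz z (Finset.mem_univ z)
  exact T.deg_ne_zero z this

lemma sumDeg_ne_top (T : TreeWithLoop S) : (∑ z : S, (T.deg z : ℝ≥0∞)) ≠ ∞ := by
  exact (ENNReal.sum_lt_top.2 fun z _ => (T.deg_ne_top z).lt_top).ne

lemma stat_step (T : TreeWithLoop S) (w : S) :
    ∑ u : S, T.statDist u * T.stepM u w = T.statDist w := by
  unfold statDist
  set D : ℝ≥0∞ := ∑ z : S, (T.deg z : ℝ≥0∞) with hD
  have key : ∑ u : S, (T.deg u : ℝ≥0∞) * T.stepM u w = (T.deg w : ℝ≥0∞) := by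
    calc ∑ u : S, (T.deg u : ℝ≥0∞) * T.stepM u w
        = ∑ u : S, (T.deg w : ℝ≥0∞) * T.stepM w u :=
          Finset.sum_congr rfl fun u _ => T.balance u w
      _ = (T.deg w : ℝ≥0∞) * ∑ u : S, T.stepM w u := by rw [Finset.mul_sum]
      _ = (T.deg w : ℝ≥0∞) := by rw [T.rowSum w, mul_one]
  calc ∑ u : S, (T.deg u : ℝ≥0∞) / D * T.stepM u w
      = ∑ u : S, (T.deg u : ℝ≥0∞) * T.stepM u w * D⁻¹ := by
        refine Finset.sum_congr rfl fun u _ => ?_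
        rw [div_eq_mul_inv, mul_right_comm]
    _ = (∑ u : S, (T.deg u : ℝ≥0∞) * T.stepM u w) * D⁻¹ := by rw [Finset.sum_mul]
    _ = (T.deg w : ℝ≥0∞) / D := by rw [key, div_eq_mul_inv]

lemma stat_pow (T : TreeWithLoop S) (j : ℕ) (w : S) :
    ∑ u : S, T.statDist u * (T.stepM ^ j) u w = T.statDist w := by
  induction j generalizing w with
  | zero =>
    simp only [pow_zero, Matrix.one_apply, mul_ite, mul_one, mul_zero]
    rw [Finset.sum_ite_eq' Finset.univ w T.statDist]
    simp
  | succ j ih =>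
    have hps : T.stepM ^ (j + 1) = T.stepM ^ j * T.stepM := pow_succ _ _
    calc ∑ u : S, T.statDist u * (T.stepM ^ (j+1)) u w
        = ∑ u : S, ∑ y : S, T.statDist u * ((T.stepM ^ j) u y * T.stepM y w) := by
          refine Finset.sum_congr rfl fun u _ => ?_
          rw [hps, Matrix.mul_apply, Finset.mul_sum]
      _ = ∑ y : S, ∑ u : S, (T.statDist u * (T.stepM ^ j) u y) * T.stepM y w := by
          rw [Finset.sum_comm]
          exact Finset.sum_congr rfl fun y _ => Finset.sum_congr rfl fun u _ => by ring
      _ = ∑ y : S, (∑ u : S, T.statDist u * (T.stepM ^ j) u y) * T.stepM y w := by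
          simp [Finset.sum_mul]
      _ = ∑ y : S, T.statDist y * T.stepM y w := by
          refine Finset.sum_congr rfl fun y _ => by rw [ih y]
      _ = T.statDist w := T.stat_step w

end TreeWithLoop

/-- **Stationarity at the first growth time.**
Let `(X_n)` be the simple random walk on a finite tree-with-loop `T` started at `x` (possibly
carrying extra independent randomization), with an (a.s. finite, here `ℕ`-valued) strong
stationary time `η`.  Let `(Z_n)_{n≥1}` be independent nonnegative-integer random variables,
independent of `((X_n), η)`, with `P(Z_n = 0) > 0` for every `n ≥ 1`, and let
`τ = inf{n > 0 : Z_n ≥ 1}` be almost surely finite.  Then `P(η < τ) > 0` and, for every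
vertex `v`, `P(X_η = v ∣ η < τ) = P(X_{τ-1} = v ∣ η < τ) = π(v)`.

The walk and the strong stationary time are encoded as in the previous statement: `X 0 = x`
a.s., Markov property `hMarkov`, strong stationarity `hSS`, strong Markov property at `η`
`hSM`. -/
theorem stationary_at_first_growth_time
    {S : Type*} [Fintype S] [DecidableEq S] [MeasurableSpace S] [MeasurableSingletonClass S]
    {Ω : Type*} [MeasurableSpace Ω] (μ : Measure Ω) [IsProbabilityMeasure μ]
    (T : TreeWithLoop S) (x : S)
    (X : ℕ → Ω → S) (hXmeas : ∀ n, Measurable (X n))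
    (η : Ω → ℕ) (hηmeas : Measurable η)
    (hX0 : μ {ω | X 0 ω = x} = 1)
    (hMarkov : ∀ (n : ℕ) (path : Fin (n + 1) → S) (y : S),
      μ {ω | (∀ i : Fin (n + 1), X i.1 ω = path i) ∧ X (n + 1) ω = y}
        = T.stepM (path (Fin.last n)) y * μ {ω | ∀ i : Fin (n + 1), X i.1 ω = path i})
    (hSS : ∀ (k : ℕ) (y : S),
      μ {ω | X (η ω) ω = y ∧ η ω = k} = T.statDist y * μ {ω | η ω = k})
    (hSM : ∀ (k j : ℕ) (w y : S),
      μ {ω | X (k + j) ω = y ∧ X k ω = w ∧ η ω = k}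
        = (T.stepM ^ j) w y * μ {ω | X k ω = w ∧ η ω = k})
    (Z : ℕ → Ω → ℕ) (hZmeas : ∀ n, Measurable (Z n))
    (hZindep : iIndepFun Z μ)
    (hZXη : IndepFun (fun ω => ((fun n => X n ω), η ω)) (fun ω => (fun n => Z n ω)) μ)
    (hZzero : ∀ n : ℕ, 1 ≤ n → 0 < μ {ω | Z n ω = 0})
    (τ : Ω → ℕ) (hτdef : ∀ ω, τ ω = sInf {n : ℕ | 0 < n ∧ 1 ≤ Z n ω})
    (hτfin : μ {ω | ∃ n : ℕ, 0 < n ∧ 1 ≤ Z n ω} = 1)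
    (v : S) :
    μ {ω | η ω < τ ω} ≠ 0 ∧
    μ[|{ω | η ω < τ ω}] {ω | X (η ω) ω = v} = T.statDist v ∧
    μ[|{ω | η ω < τ ω}] {ω | X (τ ω - 1) ω = v} = T.statDist v := by
  classical
  set E : ℕ → Set Ω := fun k => {ω | η ω = k} with hEdef
  set G : ℕ → Set Ω := fun m =>
    {ω | (∀ n, 1 ≤ n → n < m → Z n ω = 0) ∧ 1 ≤ Z m ω} with hGdef
  set N : Set Ω := {ω | ∃ n : ℕ, 0 < n ∧ 1 ≤ Z n ω} with hNdef
  set W : ℕ × ℕ → Set Ω := fun p => if p.1 < p.2 then E p.1 ∩ G p.2 else ∅ with hWdef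
  set f : Ω → (ℕ → S) × ℕ := fun ω => ((fun n => X n ω), η ω) with hfdef
  set C : Set Ω := {ω | η ω < τ ω} with hCdef
  -- measurability of the basic events
  have hEmeas : ∀ k, MeasurableSet (E k) := fun k => hηmeas (MeasurableSet.singleton k)
  have hGmeas : ∀ m, MeasurableSet (G m) := by
    intro m
    have heq : G m = (⋂ n, ⋂ (_ : 1 ≤ n), ⋂ (_ : n < m), Z n ⁻¹' {0}) ∩ Z m ⁻¹' Set.Ici 1 := by
      ext ω
      simp [hGdef, Set.mem_iInter]
    rw [heq]
    exact ((MeasurableSet.iInter fun n => MeasurableSet.iInter fun _ =>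
      MeasurableSet.iInter fun _ => hZmeas n (MeasurableSet.singleton 0)).inter
      (hZmeas m ((Set.to_countable _).measurableSet)))
  have hNmeas : MeasurableSet N := by
    have heq : N = ⋃ n : ℕ, Z (n + 1) ⁻¹' Set.Ici 1 := by
      ext ω
      constructor
      · rintro ⟨n, hn, h1⟩
        exact Set.mem_iUnion.2 ⟨n - 1, show (1:ℕ) ≤ Z (n - 1 + 1) ω by
          rw [Nat.sub_add_cancel hn]; exact h1⟩
      · intro h
        obtain ⟨k, hk⟩ := Set.mem_iUnion.1 h
        exact ⟨k + 1, Nat.succ_pos k, hk⟩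
    rw [heq]
    exact MeasurableSet.iUnion fun n => hZmeas (n + 1) ((Set.to_countable _).measurableSet)
  have hWmeas : ∀ p : ℕ × ℕ, MeasurableSet (W p) := by
    intro p
    simp only [hWdef]
    by_cases hp : p.1 < p.2
    · rw [if_pos hp]; exact (hEmeas p.1).inter (hGmeas p.2)
    · rw [if_neg hp]; exact MeasurableSet.empty
  have hNc : μ Nᶜ = 0 := (prob_compl_eq_zero_iff hNmeas).2 hτfin
  -- facts about τ
  have hGτ : ∀ m ω, 0 < m → ω ∈ G m → τ ω = m := by
    intro m ω hm hω
    have hω' : (∀ n, 1 ≤ n → n < m → Z n ω = 0) ∧ 1 ≤ Z m ω := hω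
    obtain ⟨h1, h2⟩ := hω'
    have hne : {n : ℕ | 0 < n ∧ 1 ≤ Z n ω}.Nonempty := ⟨m, hm, h2⟩
    have hmem := Nat.sInf_mem hne
    have hle : sInf {n : ℕ | 0 < n ∧ 1 ≤ Z n ω} ≤ m := Nat.sInf_le ⟨hm, h2⟩
    rw [hτdef]
    by_contra hne'
    have hlt : sInf {n : ℕ | 0 < n ∧ 1 ≤ Z n ω} < m := lt_of_le_of_ne hle hne'
    have hz := h1 _ hmem.1 hlt
    have h12 := hmem.2
    omega
  have hNG : ∀ ω, ω ∈ N → 0 < τ ω ∧ ω ∈ G (τ ω) := by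
    intro ω hω
    obtain ⟨n, hn, h1⟩ := hω
    have hne : {n : ℕ | 0 < n ∧ 1 ≤ Z n ω}.Nonempty := ⟨n, hn, h1⟩
    have hmem := Nat.sInf_mem hne
    have hτω : τ ω = sInf {n : ℕ | 0 < n ∧ 1 ≤ Z n ω} := hτdef ω
    refine ⟨by rw [hτω]; exact hmem.1, ?_⟩
    simp only [hGdef, Set.mem_setOf_eq]
    refine ⟨?_, by rw [hτω]; exact hmem.2⟩
    intro n' hn1 hn2
    by_contra hz
    have h1' : 1 ≤ Z n' ω := Nat.one_le_iff_ne_zero.2 hz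
    have hle : sInf {n : ℕ | 0 < n ∧ 1 ≤ Z n ω} ≤ n' := Nat.sInf_le ⟨hn1, h1'⟩
    rw [hτω] at hn2
    omega
  -- decomposition of B ∩ C ∩ N
  have hCN : ∀ B : Set Ω, (B ∩ C) ∩ N = ⋃ p : ℕ × ℕ, B ∩ W p := by
    intro B
    ext ω
    constructor
    · rintro ⟨⟨hB, hlt⟩, hωN⟩
      obtain ⟨hpos, hGm⟩ := hNG ω hωN
      refine Set.mem_iUnion.2 ⟨(η ω, τ ω), hB, ?_⟩
      simp only [hWdef]
      rw [if_pos (by exact hlt)]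
      exact ⟨rfl, hGm⟩
    · intro hmem
      obtain ⟨p, hB, hW⟩ := Set.mem_iUnion.1 hmem
      simp only [hWdef] at hW
      by_cases hp : p.1 < p.2
      · rw [if_pos hp] at hW
        obtain ⟨hEω, hGω⟩ := hW
        have hη : η ω = p.1 := hEω
        have hτω : τ ω = p.2 := hGτ p.2 ω (by omega) hGω
        have hGω' : (∀ n, 1 ≤ n → n < p.2 → Z n ω = 0) ∧ 1 ≤ Z p.2 ω := hGω
        exact ⟨⟨hB, show η ω < τ ω by omega⟩, ⟨p.2, by omega, hGω'.2⟩⟩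
      · rw [if_neg hp] at hW
        exact absurd hW (Set.notMem_empty ω)
  -- pairwise disjointness
  have hWdisj : Pairwise (Function.onFun Disjoint W) := by
    rintro p q hne
    simp only [Function.onFun, hWdef]
    by_cases h1 : p.1 < p.2
    · by_cases h2 : q.1 < q.2
      · rw [if_pos h1, if_pos h2, Set.disjoint_left]
        rintro ω ⟨hE1, hG1⟩ ⟨hE2, hG2⟩
        have he1 : η ω = p.1 := hE1
        have he2 : η ω = q.1 := hE2
        have hτ1 : τ ω = p.2 := hGτ p.2 ω (by omega) hG1
        have hτ2 : τ ω = q.2 := hGτ q.2 ω (by omega) hG2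
        exact hne (Prod.ext (by omega) (by omega))
      · rw [if_neg h2]; simp
    · rw [if_neg h1]; simp
  -- independence of (X, η)-events and G m
  have hindep : ∀ (A : Set ((ℕ → S) × ℕ)) (m : ℕ), MeasurableSet A →
      μ (f ⁻¹' A ∩ G m) = μ (f ⁻¹' A) * μ (G m) := by
    intro A m hA
    have hGset : MeasurableSet {z : ℕ → ℕ | (∀ n, 1 ≤ n → n < m → z n = 0) ∧ 1 ≤ z m} := by
      have heq : {z : ℕ → ℕ | (∀ n, 1 ≤ n → n < m → z n = 0) ∧ 1 ≤ z m}
          = (⋂ n, ⋂ (_ : 1 ≤ n), ⋂ (_ : n < m), (fun z : ℕ → ℕ => z n) ⁻¹' {0})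
            ∩ (fun z : ℕ → ℕ => z m) ⁻¹' Set.Ici 1 := by
        ext z; simp [Set.mem_iInter]
      rw [heq]
      exact ((MeasurableSet.iInter fun n => MeasurableSet.iInter fun _ =>
        MeasurableSet.iInter fun _ => measurable_pi_apply n (MeasurableSet.singleton 0)).inter
        (measurable_pi_apply m ((Set.to_countable _).measurableSet)))
    have hGpre : G m = (fun ω => fun n => Z n ω) ⁻¹'
        {z : ℕ → ℕ | (∀ n, 1 ≤ n → n < m → z n = 0) ∧ 1 ≤ z m} := by
      rw [hGdef]
      rfl
    rw [hGpre]
    exact hZXη.measure_inter_preimage_eq_mul _ _ hA hGset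
  have hEpre : ∀ k : ℕ, E k = f ⁻¹' ((Prod.snd : (ℕ → S) × ℕ → ℕ) ⁻¹' {k}) := by
    intro k
    rw [hEdef, hfdef]
    ext ω; simp
  have hXEpre : ∀ (a k : ℕ), {ω | X a ω = v} ∩ E k
      = f ⁻¹' {p : (ℕ → S) × ℕ | p.1 a = v ∧ p.2 = k} := by
    intro a k
    rw [hEdef, hfdef]
    ext ω; simp
  have hAmeas : ∀ (a k : ℕ), MeasurableSet {p : (ℕ → S) × ℕ | p.1 a = v ∧ p.2 = k} := by
    intro a k
    have heq : {p : (ℕ → S) × ℕ | p.1 a = v ∧ p.2 = k}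
        = ((fun p : (ℕ → S) × ℕ => p.1 a) ⁻¹' {v}) ∩ ((Prod.snd : (ℕ → S) × ℕ → ℕ) ⁻¹' {k}) := by
      ext p; simp [Set.mem_inter_iff]
    rw [heq]
    exact (((measurable_pi_apply a).comp measurable_fst) (MeasurableSet.singleton v)).inter
      (measurable_snd (MeasurableSet.singleton k))
  have hterm1 : ∀ k m : ℕ, μ (E k ∩ G m) = μ (E k) * μ (G m) := by
    intro k m
    rw [hEpre k]
    exact hindep _ m (measurable_snd (MeasurableSet.singleton k))
  -- strong stationarity reformulated
  have hSS' : ∀ (k : ℕ) (w : S), μ ({ω | X k ω = w} ∩ E k) = T.statDist w * μ (E k) := by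
    intro k w
    have hset : {ω | X k ω = w} ∩ E k = {ω | X (η ω) ω = w ∧ η ω = k} := by
      rw [hEdef]
      ext ω
      simp only [Set.mem_inter_iff, Set.mem_setOf_eq]
      constructor
      · rintro ⟨h1, h2⟩; exact ⟨by rw [h2]; exact h1, h2⟩
      · rintro ⟨h1, h2⟩; exact ⟨by rw [← h2]; exact h1, h2⟩
    rw [hset, hSS k w, hEdef]
  -- key lemma: distribution at a later deterministic time on {η = k}
  have hL : ∀ (k a : ℕ), k ≤ a → μ ({ω | X a ω = v} ∩ E k) = T.statDist v * μ (E k) := by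
    intro k a hka
    obtain ⟨j, rfl⟩ : ∃ j, a = k + j := ⟨a - k, by omega⟩
    have hdecomp : {ω | X (k + j) ω = v} ∩ E k
        = ⋃ w : S, {ω | X (k + j) ω = v ∧ X k ω = w ∧ η ω = k} := by
      rw [hEdef]
      ext ω
      simp only [Set.mem_inter_iff, Set.mem_setOf_eq, Set.mem_iUnion]
      constructor
      · rintro ⟨h1, h2⟩; exact ⟨X k ω, h1, rfl, h2⟩
      · rintro ⟨w, h1, h2, h3⟩; exact ⟨h1, h3⟩
    have hdisj : Pairwise (Function.onFun Disjoint
        fun w : S => {ω | X (k + j) ω = v ∧ X k ω = w ∧ η ω = k}) := by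
      intro w1 w2 hw
      simp only [Function.onFun]
      rw [Set.disjoint_left]
      rintro ω ⟨-, h2, -⟩ ⟨-, h2', -⟩
      exact hw (h2.symm.trans h2')
    have hmeasw : ∀ w : S, MeasurableSet {ω | X (k + j) ω = v ∧ X k ω = w ∧ η ω = k} :=
      fun w => (hXmeas (k + j) (MeasurableSet.singleton v)).inter
        ((hXmeas k (MeasurableSet.singleton w)).inter (hηmeas (MeasurableSet.singleton k)))
    rw [hdecomp, measure_iUnion hdisj hmeasw, tsum_fintype]
    have hterm : ∀ w : S, μ {ω | X (k + j) ω = v ∧ X k ω = w ∧ η ω = k}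
        = (T.stepM ^ j) w v * (T.statDist w * μ (E k)) := by
      intro w
      rw [hSM k j w v]
      congr 1
      have hset : {ω | X k ω = w ∧ η ω = k} = {ω | X k ω = w} ∩ E k := by
        rw [hEdef]
        ext ω
        simp [Set.mem_inter_iff]
      rw [hset, hSS' k w]
    rw [Finset.sum_congr rfl fun w _ => hterm w]
    calc ∑ w : S, (T.stepM ^ j) w v * (T.statDist w * μ (E k))
        = (∑ w : S, T.statDist w * (T.stepM ^ j) w v) * μ (E k) := by
          rw [Finset.sum_mul]
          exact Finset.sum_congr rfl fun w _ => by ring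
      _ = T.statDist v * μ (E k) := by rw [T.stat_pow j v]
  have hterm2 : ∀ (a k m : ℕ), k ≤ a → μ (({ω | X a ω = v} ∩ E k) ∩ G m)
      = T.statDist v * (μ (E k) * μ (G m)) := by
    intro a k m hka
    rw [hXEpre a k, hindep _ m (hAmeas a k), ← hXEpre a k, hL k a hka, mul_assoc]
  -- general summation identity
  have hsum : ∀ B : Set Ω, (∀ p : ℕ × ℕ, MeasurableSet (B ∩ W p)) →
      μ (B ∩ C) = ∑' p : ℕ × ℕ, μ (B ∩ W p) := by
    intro B hBW
    rw [← measure_inter_conull hNc, hCN B,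
      measure_iUnion (fun p q hpq => (hWdisj hpq).mono Set.inter_subset_right
        Set.inter_subset_right) hBW]
  have hμC : μ C = ∑' p : ℕ × ℕ, μ (W p) := by
    have h := hsum Set.univ (fun p => by rw [Set.univ_inter]; exact hWmeas p)
    simpa [Set.univ_inter] using h
  have hWval : ∀ p : ℕ × ℕ, μ (W p) = if p.1 < p.2 then μ (E p.1) * μ (G p.2) else 0 := by
    intro p
    simp only [hWdef]
    by_cases hp : p.1 < p.2
    · rw [if_pos hp, if_pos hp, hterm1]
    · rw [if_neg hp, if_neg hp, measure_empty]
  -- (b) : X at time η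
  have hb : μ ({ω | X (η ω) ω = v} ∩ C) = T.statDist v * μ C := by
    have hset2 : ∀ p : ℕ × ℕ, {ω | X (η ω) ω = v} ∩ W p
        = if p.1 < p.2 then ({ω | X p.1 ω = v} ∩ E p.1) ∩ G p.2 else ∅ := by
      intro p
      simp only [hWdef]
      by_cases hp : p.1 < p.2
      · rw [if_pos hp, if_pos hp]
        ext ω
        simp only [Set.mem_inter_iff, Set.mem_setOf_eq]
        constructor
        · rintro ⟨h1, h2, h3⟩
          have hη : η ω = p.1 := h2
          exact ⟨⟨by rw [← hη]; exact h1, h2⟩, h3⟩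
        · rintro ⟨⟨h1, h2⟩, h3⟩
          have hη : η ω = p.1 := h2
          exact ⟨by rw [hη]; exact h1, h2, h3⟩
      · rw [if_neg hp, if_neg hp, Set.inter_empty]
    have hmeas2 : ∀ p : ℕ × ℕ, MeasurableSet ({ω | X (η ω) ω = v} ∩ W p) := by
      intro p
      rw [hset2 p]
      by_cases hp : p.1 < p.2
      · rw [if_pos hp]
        exact ((hXmeas p.1 (MeasurableSet.singleton v)).inter (hEmeas p.1)).inter (hGmeas p.2)
      · rw [if_neg hp]; exact MeasurableSet.empty
    rw [hsum _ hmeas2]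
    calc ∑' p : ℕ × ℕ, μ ({ω | X (η ω) ω = v} ∩ W p)
        = ∑' p : ℕ × ℕ, T.statDist v * (if p.1 < p.2 then μ (E p.1) * μ (G p.2) else 0) := by
          refine tsum_congr fun p => ?_
          rw [hset2 p]
          by_cases hp : p.1 < p.2
          · rw [if_pos hp, if_pos hp, hterm2 p.1 p.1 p.2 le_rfl]
          · rw [if_neg hp, if_neg hp, measure_empty, mul_zero]
      _ = T.statDist v * ∑' p : ℕ × ℕ, (if p.1 < p.2 then μ (E p.1) * μ (G p.2) else 0) :=
          ENNReal.tsum_mul_left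
      _ = T.statDist v * μ C := by
          rw [hμC]
          congr 1
          exact (tsum_congr fun p => (hWval p)).symm
  -- (c) : X at time τ - 1
  have hc : μ ({ω | X (τ ω - 1) ω = v} ∩ C) = T.statDist v * μ C := by
    have hset3 : ∀ p : ℕ × ℕ, {ω | X (τ ω - 1) ω = v} ∩ W p
        = if p.1 < p.2 then ({ω | X (p.2 - 1) ω = v} ∩ E p.1) ∩ G p.2 else ∅ := by
      intro p
      simp only [hWdef]
      by_cases hp : p.1 < p.2
      · rw [if_pos hp, if_pos hp]
        ext ω
        simp only [Set.mem_inter_iff, Set.mem_setOf_eq]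
        constructor
        · rintro ⟨h1, h2, h3⟩
          have hτω : τ ω = p.2 := hGτ p.2 ω (by omega) h3
          exact ⟨⟨by rw [← hτω]; exact h1, h2⟩, h3⟩
        · rintro ⟨⟨h1, h2⟩, h3⟩
          have hτω : τ ω = p.2 := hGτ p.2 ω (by omega) h3
          exact ⟨by rw [hτω]; exact h1, h2, h3⟩
      · rw [if_neg hp, if_neg hp, Set.inter_empty]
    have hmeas3 : ∀ p : ℕ × ℕ, MeasurableSet ({ω | X (τ ω - 1) ω = v} ∩ W p) := by
      intro p
      rw [hset3 p]
      by_cases hp : p.1 < p.2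
      · rw [if_pos hp]
        exact ((hXmeas (p.2 - 1) (MeasurableSet.singleton v)).inter (hEmeas p.1)).inter
          (hGmeas p.2)
      · rw [if_neg hp]; exact MeasurableSet.empty
    rw [hsum _ hmeas3]
    calc ∑' p : ℕ × ℕ, μ ({ω | X (τ ω - 1) ω = v} ∩ W p)
        = ∑' p : ℕ × ℕ, T.statDist v * (if p.1 < p.2 then μ (E p.1) * μ (G p.2) else 0) := by
          refine tsum_congr fun p => ?_
          rw [hset3 p]
          by_cases hp : p.1 < p.2
          · rw [if_pos hp, if_pos hp, hterm2 (p.2 - 1) p.1 p.2 (by omega)]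
          · rw [if_neg hp, if_neg hp, measure_empty, mul_zero]
      _ = T.statDist v * ∑' p : ℕ × ℕ, (if p.1 < p.2 then μ (E p.1) * μ (G p.2) else 0) :=
          ENNReal.tsum_mul_left
      _ = T.statDist v * μ C := by
          rw [hμC]
          congr 1
          exact (tsum_congr fun p => (hWval p)).symm
  -- positivity of μ C
  have hsumE : ∑' k : ℕ, μ (E k) = 1 := by
    have hdisjE : Pairwise (Function.onFun Disjoint E) := by
      intro a b hab
      simp only [Function.onFun, hEdef]
      rw [Set.disjoint_left]
      rintro ω h1 h2
      exact hab ((show η ω = a from h1).symm.trans h2)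
    have hunion : (⋃ k, E k) = Set.univ := by
      ext ω; simp [hEdef]
    rw [← measure_iUnion hdisjE hEmeas, hunion, measure_univ]
  obtain ⟨k0, hk0⟩ : ∃ k, μ (E k) ≠ 0 := by
    by_contra h
    push_neg at h
    simp only [h, tsum_zero] at hsumE
    exact zero_ne_one hsumE
  have hAprod : μ (⋂ n ∈ Finset.Icc 1 k0, Z n ⁻¹' ({0} : Set ℕ))
      = ∏ n ∈ Finset.Icc 1 k0, μ (Z n ⁻¹' ({0} : Set ℕ)) :=
    hZindep.meas_biInter fun n _ => ⟨{0}, (Set.to_countable _).measurableSet, rfl⟩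
  have hApos : μ (⋂ n ∈ Finset.Icc 1 k0, Z n ⁻¹' ({0} : Set ℕ)) ≠ 0 := by
    rw [hAprod, Finset.prod_ne_zero_iff]
    intro n hn
    exact (hZzero n (Finset.mem_Icc.1 hn).1).ne'
  have hAN : (⋂ n ∈ Finset.Icc 1 k0, Z n ⁻¹' ({0} : Set ℕ)) ∩ N
      ⊆ ⋃ m : ℕ, (if k0 < m then G m else ∅) := by
    rintro ω ⟨hA, hωN⟩
    obtain ⟨hpos, hGm⟩ := hNG ω hωN
    have hGm' : (∀ n, 1 ≤ n → n < τ ω → Z n ω = 0) ∧ 1 ≤ Z (τ ω) ω := hGm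
    have hk0m : k0 < τ ω := by
      by_contra hle
      push_neg at hle
      have hmem : ω ∈ Z (τ ω) ⁻¹' ({0} : Set ℕ) :=
        Set.mem_iInter₂.1 hA (τ ω) (Finset.mem_Icc.2 ⟨hpos, hle⟩)
      have hz : Z (τ ω) ω = 0 := hmem
      have := hGm'.2
      omega
    exact Set.mem_iUnion.2 ⟨τ ω, by rw [if_pos hk0m]; exact hGm⟩
  obtain ⟨m0, hm0, hGm0⟩ : ∃ m, k0 < m ∧ μ (G m) ≠ 0 := by
    have hle : μ (⋂ n ∈ Finset.Icc 1 k0, Z n ⁻¹' ({0} : Set ℕ))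
        ≤ ∑' m : ℕ, μ (if k0 < m then G m else ∅) := by
      calc μ (⋂ n ∈ Finset.Icc 1 k0, Z n ⁻¹' ({0} : Set ℕ))
          = μ ((⋂ n ∈ Finset.Icc 1 k0, Z n ⁻¹' ({0} : Set ℕ)) ∩ N) :=
            (measure_inter_conull hNc).symm
        _ ≤ μ (⋃ m : ℕ, (if k0 < m then G m else ∅)) := measure_mono hAN
        _ ≤ ∑' m : ℕ, μ (if k0 < m then G m else ∅) := measure_iUnion_le _
    by_contra h
    push_neg at h
    have hz : ∀ m : ℕ, μ (if k0 < m then G m else ∅) = 0 := by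
      intro m
      by_cases hm : k0 < m
      · rw [if_pos hm]; exact h m hm
      · rw [if_neg hm]; exact measure_empty
    simp only [hz, tsum_zero] at hle
    exact hApos (le_zero_iff.1 hle)
  have hCpos : μ C ≠ 0 := by
    have hge : μ (W (k0, m0)) ≤ μ C := by
      rw [hμC]
      exact ENNReal.le_tsum (k0, m0)
    have hWne : μ (W (k0, m0)) ≠ 0 := by
      rw [hWval (k0, m0)]
      simp only
      rw [if_pos hm0]
      exact mul_ne_zero hk0 hGm0
    intro h0
    rw [h0] at hge
    exact hWne (le_zero_iff.1 hge)
  -- measurability of C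
  have hτmeas : Measurable τ := by
    apply measurable_to_countable'
    intro m
    rcases Nat.eq_zero_or_pos m with hm | hm
    · subst hm
      have heq : τ ⁻¹' {0} = Nᶜ := by
        ext ω
        simp only [Set.mem_preimage, Set.mem_singleton_iff, Set.mem_compl_iff]
        constructor
        · intro h0 hωN
          have := (hNG ω hωN).1
          omega
        · intro hωN
          rw [hτdef, Nat.sInf_eq_zero]
          right
          rw [Set.eq_empty_iff_forall_notMem]
          intro n hn
          exact hωN ⟨n, hn⟩
      rw [heq]
      exact hNmeas.compl
    · have heq : τ ⁻¹' {m} = G m := by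
        ext ω
        simp only [Set.mem_preimage, Set.mem_singleton_iff]
        constructor
        · intro h
          have hωN : ω ∈ N := by
            by_contra hωN
            have hemp : {n : ℕ | 0 < n ∧ 1 ≤ Z n ω} = ∅ := by
              rw [Set.eq_empty_iff_forall_notMem]
              intro n hn
              exact hωN ⟨n, hn⟩
            rw [hτdef, hemp, Nat.sInf_empty] at h
            omega
          have h2 := (hNG ω hωN).2
          rw [h] at h2
          exact h2
        · intro h
          exact hGτ m ω hm h
      rw [heq]
      exact hGmeas m
  have hCmeas : MeasurableSet C := measurableSet_lt hηmeas hτmeas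
  refine ⟨hCpos, ?_, ?_⟩
  · rw [cond_apply hCmeas μ, Set.inter_comm, hb, mul_comm (T.statDist v), ← mul_assoc,
      ENNReal.inv_mul_cancel hCpos (measure_ne_top μ C), one_mul]
  · rw [cond_apply hCmeas μ, Set.inter_comm, hc, mul_comm (T.statDist v), ← mul_assoc,
      ENNReal.inv_mul_cancel hCpos (measure_ne_top μ C), one_mul]
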